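/- Let a ≥ 1 and q ≥ 1 be natural numbers. In the infinite perfect binary tree, let 𝒩_q be a finite set of exactly q nodes containing the root n1 such that every non-root node n ∈ 𝒩_q has an ancestor n̄ ∈ 𝒩_q with 1 ≤ d(n) − d(n̄) ≤ a. Let 𝒩_{q,a} = ⋃_{n ∈ 𝒩_q} {m : n ⪯ m and d(m) − d(n) ≤ a}. Then |𝒩_{q,a}| ≥ (q+1)·2^a − 1. (This is the counting fact underlying the paper's lower bound that any search algorithm must visit at least (q+1)·2^{a−1} nodes on average before visiting a solution node placed uniformly at random in 𝒩_{q,a}.) -/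

import Mathlib

/-- A rooted tree: a parent map with a root that every node reaches after finitely
many applications of the parent map. -/
structure ParentTree (N : Type*) where
  root : N
  par : N → N
  par_root : par root = root
  reaches_root : ∀ n : N, ∃ k : ℕ, par^[k] n = root

namespace ParentTree

variable {N : Type*}

/-- `t.anc n m` means `n` is an ancestor of `m` (possibly `n = m`). -/
def anc (t : ParentTree N) (n m : N) : Prop := ∃ k : ℕ, t.par^[k] m = n

/-- `t.sanc n m` means `n` is a strict ancestor of `m`. -/
def sanc (t : ParentTree N) (n m : N) : Prop := t.anc n m ∧ n ≠ m

/-- The set of children of a node. -/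
def children (t : ParentTree N) (n : N) : Set N := {m | m ≠ t.root ∧ t.par m = n}

/-- The depth of a node: the least `k` with `par^[k] n = root`. -/
noncomputable def depth (t : ParentTree N) (n : N) : ℕ := sInf {k : ℕ | t.par^[k] n = t.root}

/-- The distance from an ancestor `n` to `m`: the least `k` with `par^[k] m = n`. -/
noncomputable def dist (t : ParentTree N) (n m : N) : ℕ := sInf {k : ℕ | t.par^[k] m = n}

end ParentTree

namespace ParentTreeAux

open ParentTree

variable {N : Type*} (t : ParentTree N)

lemma depth_spec (n : N) : t.par^[t.depth n] n = t.root :=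
  Nat.sInf_mem (t.reaches_root n)

lemma depth_le {n : N} {k : ℕ} (h : t.par^[k] n = t.root) : t.depth n ≤ k :=
  Nat.sInf_le h

lemma depth_root : t.depth t.root = 0 :=
  Nat.le_zero.mp (depth_le t (by simp))

lemma eq_root_of_depth_eq_zero {n : N} (h : t.depth n = 0) : n = t.root := by
  have h2 := depth_spec t n
  rw [h] at h2
  simpa using h2

lemma iterate_par_root (k : ℕ) : t.par^[k] t.root = t.root := by
  induction k with
  | zero => rfl
  | succ k ih => rw [Function.iterate_succ_apply', ih, t.par_root]

lemma depth_of_par {m : N} (h : m ≠ t.root) : t.depth m = t.depth (t.par m) + 1 := by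
  have h1 : t.depth m ≤ t.depth (t.par m) + 1 :=
    depth_le t (by rw [Function.iterate_succ_apply]; exact depth_spec t _)
  have h0 : t.depth m ≠ 0 := fun h0 => h (eq_root_of_depth_eq_zero t h0)
  have h2 : t.par^[t.depth m - 1 + 1] m = t.root := by
    rw [Nat.sub_add_cancel (Nat.one_le_iff_ne_zero.mpr h0)]; exact depth_spec t m
  rw [Function.iterate_succ_apply] at h2
  have h3 := depth_le t h2
  omega

lemma depth_iterate {m : N} {k : ℕ} (hk : k ≤ t.depth m) :
    t.depth (t.par^[k] m) = t.depth m - k := by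
  induction k with
  | zero => simp
  | succ k ih =>
    have hk' : k ≤ t.depth m := by omega
    have hne : t.par^[k] m ≠ t.root := by
      intro h; have := depth_le t h; omega
    have h1 := depth_of_par t hne
    have h2 := ih hk'
    rw [Function.iterate_succ_apply']
    omega

lemma anc_canonical {n m : N} (h : t.anc n m) :
    t.depth n ≤ t.depth m ∧ t.par^[t.depth m - t.depth n] m = n := by
  obtain ⟨k, hk⟩ := h
  by_cases hkd : k ≤ t.depth m
  · have hd := depth_iterate t hkd
    rw [hk] at hd
    refine ⟨by omega, ?_⟩
    have he : t.depth m - t.depth n = k := by omega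
    rw [he, hk]
  · have hn : n = t.root := by
      rw [← hk]
      have h2 : t.par^[k] m = t.par^[k - t.depth m] (t.par^[t.depth m] m) := by
        rw [← Function.iterate_add_apply]; congr 1; omega
      rw [h2, depth_spec, iterate_par_root]
    subst hn
    have h0 := depth_root t
    rw [h0]
    exact ⟨Nat.zero_le _, by simpa using depth_spec t m⟩

variable [DecidableEq N]

/-- The set of descendants at exact distance `j` below `n`, built from the child
selector `c`. -/
def desc (c : N → Bool → N) : ℕ → N → Finset N
  | 0, n => {n}
  | (j+1), n => desc c j (c n false) ∪ desc c j (c n true)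

lemma desc_spec (c : N → Bool → N)
    (hc : ∀ n b, c n b ≠ t.root ∧ t.par (c n b) = n) :
    ∀ (j : ℕ) (n : N), ∀ m ∈ desc c j n, t.par^[j] m = n ∧ t.depth m = t.depth n + j := by
  intro j
  induction j with
  | zero =>
    intro n m hm
    simp only [desc, Finset.mem_singleton] at hm
    subst hm; simp
  | succ j ih =>
    intro n m hm
    simp only [desc, Finset.mem_union] at hm
    have key : ∀ b : Bool, m ∈ desc c j (c n b) →
        t.par^[j+1] m = n ∧ t.depth m = t.depth n + (j+1) := by
      intro b hb
      obtain ⟨h1, h2⟩ := ih (c n b) m hb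
      have hcb := hc n b
      have hdep : t.depth (c n b) = t.depth n + 1 := by
        have := depth_of_par t hcb.1
        rw [hcb.2] at this
        exact this
      constructor
      · rw [Function.iterate_succ_apply', h1, hcb.2]
      · omega
    obtain hb | hb := hm
    · exact key false hb
    · exact key true hb

lemma desc_card (c : N → Bool → N)
    (hc : ∀ n b, c n b ≠ t.root ∧ t.par (c n b) = n)
    (hne : ∀ n, c n false ≠ c n true) :
    ∀ (j : ℕ) (n : N), (desc c j n).card = 2 ^ j := by
  intro j
  induction j with
  | zero => intro n; simp [desc]
  | succ j ih =>
    intro n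
    have hdisj : Disjoint (desc c j (c n false)) (desc c j (c n true)) := by
      rw [Finset.disjoint_left]
      intro m h0 h1
      have e0 := (desc_spec t c hc j (c n false) m h0).1
      have e1 := (desc_spec t c hc j (c n true) m h1).1
      exact hne n (e0 ▸ e1 ▸ rfl)
    rw [desc, Finset.card_union_of_disjoint hdisj, ih, ih, pow_succ]
    ring

end ParentTreeAux

open ParentTreeAux

/-- in the infinite perfect binary tree, if `Nq` is a set of `q ≥ 1` clue
nodes containing the root, each non-root clue node having a clue ancestor at relative
depth between 1 and `a`, then the set of nodes at depth at most `a` relative to some clue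
node has at least `(q+1)·2^a − 1` elements. -/
theorem stmt0 {N : Type*} (t : ParentTree N)
    (hbin : ∀ n : N, ∃ x y : N, x ≠ y ∧ t.children n = {x, y})
    (a q : ℕ) (ha : 1 ≤ a) (hq : 1 ≤ q)
    (Nq : Finset N) (hcard : Nq.card = q) (hroot : t.root ∈ Nq)
    (hanc : ∀ n ∈ Nq, n ≠ t.root →
      ∃ n' ∈ Nq, t.anc n' n ∧ t.depth n' < t.depth n ∧ t.depth n ≤ t.depth n' + a) :
    (q + 1) * 2 ^ a - 1 ≤
      {m : N | ∃ n ∈ Nq, t.anc n m ∧ t.depth m ≤ t.depth n + a}.ncard := by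
  classical
  choose x y hxy hch using hbin
  set S : Set N := {m : N | ∃ n ∈ Nq, t.anc n m ∧ t.depth m ≤ t.depth n + a} with hSdef
  set c : N → Bool → N := fun n b => if b then y n else x n with hcdef
  have hc : ∀ n b, c n b ≠ t.root ∧ t.par (c n b) = n := by
    intro n b
    have hx : x n ∈ t.children n := by rw [hch n]; simp
    have hy : y n ∈ t.children n := by rw [hch n]; simp
    cases b
    · simpa [hcdef, ParentTree.children] using hx
    · simpa [hcdef, ParentTree.children] using hy
  have hne : ∀ n, c n false ≠ c n true := by
    intro n; simpa [hcdef] using hxy n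
  -- the explicit finite subset
  set F : Finset N :=
    Nq.biUnion (fun n => desc c a n) ∪
      (Finset.range a).biUnion (fun j => desc c j t.root) with hFdef
  -- F ⊆ S
  have hFS : (↑F : Set N) ⊆ S := by
    intro m hm
    simp only [hFdef, Finset.coe_union, Set.mem_union, Finset.coe_biUnion,
      Set.mem_iUnion, Finset.mem_coe, Finset.mem_range] at hm
    obtain ⟨n, hn, hmn⟩ | ⟨j, hj, hmj⟩ := hm
    · obtain ⟨h1, h2⟩ := desc_spec t c hc a n m hmn
      exact ⟨n, hn, ⟨a, h1⟩, by omega⟩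
    · obtain ⟨h1, h2⟩ := desc_spec t c hc j t.root m hmj
      refine ⟨t.root, hroot, ⟨j, h1⟩, ?_⟩
      omega
  -- card of F
  have hcard1 : (Nq.biUnion (fun n => desc c a n)).card = q * 2 ^ a := by
    rw [Finset.card_biUnion]
    · rw [Finset.sum_congr rfl (fun n _ => desc_card t c hc hne a n)]
      simp [hcard, mul_comm]
    · intro n hn n' hn' hnn'
      rw [Function.onFun, Finset.disjoint_left]
      intro m h0 h1
      have e0 := (desc_spec t c hc a n m h0).1
      have e1 := (desc_spec t c hc a n' m h1).1
      exact hnn' (e0 ▸ e1 ▸ rfl)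
  have hcard2 : ((Finset.range a).biUnion (fun j => desc c j t.root)).card = 2 ^ a - 1 := by
    rw [Finset.card_biUnion]
    · rw [Finset.sum_congr rfl (fun j _ => desc_card t c hc hne j t.root)]
      have : ∀ b : ℕ, (∑ j ∈ Finset.range b, 2 ^ j) = 2 ^ b - 1 := by
        intro b
        induction b with
        | zero => simp
        | succ b ih =>
          rw [Finset.sum_range_succ, ih, pow_succ]
          have : 1 ≤ 2 ^ b := Nat.one_le_two_pow
          omega
      exact this a
    · intro j hj j' hj' hjj'
      rw [Function.onFun, Finset.disjoint_left]
      intro m h0 h1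
      have e0 := (desc_spec t c hc j t.root m h0).2
      have e1 := (desc_spec t c hc j' t.root m h1).2
      exact hjj' (by omega)
  have hdisjF : Disjoint (Nq.biUnion (fun n => desc c a n))
      ((Finset.range a).biUnion (fun j => desc c j t.root)) := by
    rw [Finset.disjoint_left]
    intro m h0 h1
    simp only [Finset.mem_biUnion, Finset.mem_range] at h0 h1
    obtain ⟨n, hn, hmn⟩ := h0
    obtain ⟨j, hj, hmj⟩ := h1
    have e0 := (desc_spec t c hc a n m hmn).2
    have e1 := (desc_spec t c hc j t.root m hmj).2
    rw [depth_root t] at e1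
    omega
  have hcardF : F.card = (q + 1) * 2 ^ a - 1 := by
    rw [hFdef, Finset.card_union_of_disjoint hdisjF, hcard1, hcard2]
    have : 1 ≤ 2 ^ a := Nat.one_le_two_pow
    have h2 : (q + 1) * 2 ^ a = q * 2 ^ a + 2 ^ a := by ring
    omega
  -- S is finite
  have hfib : ∀ n : N, (t.par ⁻¹' {n}).Finite := by
    intro n
    apply Set.Finite.subset (((Set.finite_singleton (y n)).insert (x n)).insert t.root)
    intro m hm
    simp only [Set.mem_preimage, Set.mem_singleton_iff] at hm
    by_cases hm' : m = t.root
    · exact Set.mem_insert_iff.mpr (Or.inl hm')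
    · have : m ∈ t.children n := ⟨hm', hm⟩
      rw [hch n] at this
      exact Set.mem_insert_iff.mpr (Or.inr this)
  have hfib' : ∀ (j : ℕ) (n : N), ((t.par^[j]) ⁻¹' {n}).Finite := by
    intro j
    induction j with
    | zero => intro n; simp
    | succ j ih =>
      intro n
      have he : (t.par^[j+1]) ⁻¹' {n} = t.par ⁻¹' ((t.par^[j]) ⁻¹' {n}) := by
        ext m
        simp [Function.iterate_succ_apply]
      rw [he, ← Set.biUnion_preimage_singleton]
      exact Set.Finite.biUnion (ih n) (fun p _ => hfib p)
  have hSsub : S ⊆ ⋃ n ∈ (↑Nq : Set N), ⋃ j ∈ Finset.range (a+1), (t.par^[j]) ⁻¹' {n} := by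
    intro m hm
    obtain ⟨n, hn, hanc', hdep⟩ := hm
    obtain ⟨hle, hcan⟩ := anc_canonical t hanc'
    simp only [Set.mem_iUnion, Set.mem_preimage, Set.mem_singleton_iff, Finset.mem_range,
      Finset.mem_coe]
    exact ⟨n, hn, t.depth m - t.depth n, by omega, hcan⟩
  have hSfin : S.Finite := by
    apply Set.Finite.subset _ hSsub
    apply Set.Finite.biUnion Nq.finite_toSet
    intro n _
    exact Set.Finite.biUnion (Finset.range (a+1)).finite_toSet (fun j _ => hfib' j n)
  calc (q + 1) * 2 ^ a - 1 = F.card := hcardF.symm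
    _ = (↑F : Set N).ncard := (Set.ncard_coe_finset F).symm
    _ ≤ S.ncard := Set.ncard_le_ncard hFS hSfin
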